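/- Let I ⊆ ℝ be an interval and let y, z : ℝ → ℝ be twice differentiable on I and satisfy y''(s) = (1 − 2·y(s)² − 8·z(s)²)·y(s) and z''(s) = (4 − 2·y(s)² − 8·z(s)²)·z(s) for all s ∈ I. Then the function s ↦ (y(s)² + 4·z(s)²)² − y(s)² − 16·z(s)² + y'(s)² + 4·z'(s)² has derivative identically zero on I, hence is constant on I. -/

import Mathlib

/-- **First integral H₁ of the EGJ system.**
If `y, z` are twice differentiable on an interval `I ⊆ ℝ` (with derivatives `y', y''`
and `z', z''`) and satisfy the EGJ system
`y'' = (1 − 2y² − 8z²)·y`, `z'' = (4 − 2y² − 8z²)·z` on `I`, then the function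
`H₁ = (y² + 4z²)² − y² − 16z² + (y')² + 4(z')²` has derivative identically zero on `I`,
hence is constant on `I`. -/
theorem egj_first_integral_H1
    (I : Set ℝ) (hI : I.OrdConnected)
    (y z y' z' y'' z'' : ℝ → ℝ)
    (hy : ∀ s ∈ I, HasDerivAt y (y' s) s)
    (hy' : ∀ s ∈ I, HasDerivAt y' (y'' s) s)
    (hz : ∀ s ∈ I, HasDerivAt z (z' s) s)
    (hz' : ∀ s ∈ I, HasDerivAt z' (z'' s) s)
    (hODEy : ∀ s ∈ I, y'' s = (1 - 2 * (y s) ^ 2 - 8 * (z s) ^ 2) * y s)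
    (hODEz : ∀ s ∈ I, z'' s = (4 - 2 * (y s) ^ 2 - 8 * (z s) ^ 2) * z s) :
    (∀ s ∈ I, HasDerivAt
      (fun s => ((y s) ^ 2 + 4 * (z s) ^ 2) ^ 2 - (y s) ^ 2 - 16 * (z s) ^ 2
        + (y' s) ^ 2 + 4 * (z' s) ^ 2) 0 s) ∧
    (∀ s ∈ I, ∀ t ∈ I,
      ((y s) ^ 2 + 4 * (z s) ^ 2) ^ 2 - (y s) ^ 2 - 16 * (z s) ^ 2
        + (y' s) ^ 2 + 4 * (z' s) ^ 2
      = ((y t) ^ 2 + 4 * (z t) ^ 2) ^ 2 - (y t) ^ 2 - 16 * (z t) ^ 2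
        + (y' t) ^ 2 + 4 * (z' t) ^ 2) := by
  have hderiv : ∀ s ∈ I, HasDerivAt
      (fun s => ((y s) ^ 2 + 4 * (z s) ^ 2) ^ 2 - (y s) ^ 2 - 16 * (z s) ^ 2
        + (y' s) ^ 2 + 4 * (z' s) ^ 2) 0 s := by
    intro s hs
    have H : HasDerivAt
        (fun s => ((y s) ^ 2 + 4 * (z s) ^ 2) ^ 2 - (y s) ^ 2 - 16 * (z s) ^ 2
          + (y' s) ^ 2 + 4 * (z' s) ^ 2)
        (2 * ((y s) ^ 2 + 4 * (z s) ^ 2) * (2 * y s * y' s + 4 * (2 * z s * z' s))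
          - 2 * y s * y' s - 16 * (2 * z s * z' s)
          + 2 * y' s * y'' s + 4 * (2 * z' s * z'' s)) s := by
      have h1 := ((((hy s hs).pow 2).add (((hz s hs).pow 2).const_mul 4)).pow 2)
      have h2 := (hy s hs).pow 2
      have h3 := ((hz s hs).pow 2).const_mul 16
      have h4 := (hy' s hs).pow 2
      have h5 := ((hz' s hs).pow 2).const_mul 4
      have := ((((h1.sub h2).sub h3).add h4).add h5)
      refine HasDerivAt.congr_deriv (this.congr_of_eventuallyEq (Filter.Eventually.of_forall fun x => rfl)) ?_
      simp only [Pi.add_apply, Pi.pow_apply, Nat.cast_ofNat]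
      ring
    convert H using 1
    rw [hODEy s hs, hODEz s hs]
    ring
  refine ⟨hderiv, fun s hs t ht => ?_⟩
  have hconv : Convex ℝ I := convex_iff_ordConnected.mpr hI
  have key := hconv.norm_image_sub_le_of_norm_hasDerivWithin_le
    (f := fun s => ((y s) ^ 2 + 4 * (z s) ^ 2) ^ 2 - (y s) ^ 2 - 16 * (z s) ^ 2
        + (y' s) ^ 2 + 4 * (z' s) ^ 2)
    (f' := fun _ => (0 : ℝ)) (C := 0)
    (fun x hx => (hderiv x hx).hasDerivWithinAt)
    (fun x hx => by simp) ht hs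
  simp only [zero_mul] at key
  have h0 := norm_nonneg ((y s ^ 2 + 4 * z s ^ 2) ^ 2 - y s ^ 2 - 16 * z s ^ 2 + y' s ^ 2 + 4 * z' s ^ 2 -
        ((y t ^ 2 + 4 * z t ^ 2) ^ 2 - y t ^ 2 - 16 * z t ^ 2 + y' t ^ 2 + 4 * z' t ^ 2))
  have : ‖(y s ^ 2 + 4 * z s ^ 2) ^ 2 - y s ^ 2 - 16 * z s ^ 2 + y' s ^ 2 + 4 * z' s ^ 2 -
        ((y t ^ 2 + 4 * z t ^ 2) ^ 2 - y t ^ 2 - 16 * z t ^ 2 + y' t ^ 2 + 4 * z' t ^ 2)‖ = 0 :=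
    le_antisymm key h0
  have := norm_eq_zero.mp this
  linarith
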